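/- (Estimable form of the weighted L1 distance.) Let P and Q be distributions over (W,T,Y) with q(t) > 0, q(w,t) > 0 and q(w) > 0 for q ∈ {P,Q} and all w ∈ W, t ∈ {0,1}, and assume P(w|T=t) = P(w) = Q(w) for all w,t. Let β : W × {0,1} → ℝ be any weighting function, let R be defined by R(w|T=t) = β(w,t)·Q(w|T=t), and let β*(w,t) = Q(w)/Q(w|T=t). Then for each t ∈ {0,1}: WLD_{T=t}(R,P) = Σ_{w∈W} Σ_{y∈𝒴} y·β(w,t)·Q(y,w|T=t) − Σ_{w∈W} Σ_{y∈𝒴} y·β*(w,t)·Q(w|T=t)·Q(y|T=t,W=w); i.e. WLD_{T=t}(R,P) equals E_Q[Yβ | T=t] minus E_Q[Yβ* | T=t]. -/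

import Mathlib

open Finset

/-- A distribution over `(W, T, Y)` where `T` takes values in `{0,1}` (`Fin 2`):
a nonnegative function summing to one. -/
def IsDist {W Y : Type*} [Fintype W] [Fintype Y] (q : W → Fin 2 → Y → ℝ) : Prop :=
  (∀ w t y, 0 ≤ q w t y) ∧ ∑ w, ∑ t, ∑ y, q w t y = 1

section Marginals

variable {W Y : Type*} [Fintype W] [Fintype Y]

/-- `q(w,t) = Σ_y q(w,t,y)` -/
noncomputable def pWT (q : W → Fin 2 → Y → ℝ) (w : W) (t : Fin 2) : ℝ := ∑ y, q w t y

/-- `q(t) = Σ_w q(w,t)` -/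
noncomputable def pT (q : W → Fin 2 → Y → ℝ) (t : Fin 2) : ℝ := ∑ w, pWT q w t

/-- `q(w) = Σ_t q(w,t)` -/
noncomputable def pW (q : W → Fin 2 → Y → ℝ) (w : W) : ℝ := ∑ t, pWT q w t

/-- `q(w | T = t) = q(w,t) / q(t)` -/
noncomputable def condW (q : W → Fin 2 → Y → ℝ) (w : W) (t : Fin 2) : ℝ := pWT q w t / pT q t

/-- `q(T = t | W = w) = q(w,t) / q(w)` -/
noncomputable def condT (q : W → Fin 2 → Y → ℝ) (w : W) (t : Fin 2) : ℝ := pWT q w t / pW q w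

/-- `q(y | T = t, W = w) = q(w,t,y) / q(w,t)` -/
noncomputable def condY (q : W → Fin 2 → Y → ℝ) (w : W) (t : Fin 2) (y : Y) : ℝ :=
  q w t y / pWT q w t

/-- `q(y, w | T = t) = q(w,t,y) / q(t)` -/
noncomputable def condYW (q : W → Fin 2 → Y → ℝ) (w : W) (t : Fin 2) (y : Y) : ℝ :=
  q w t y / pT q t

/-- `E_q[Y | T = t, W = w] = Σ_y ν(y) · q(y | T=t, W=w)`, where `ν` gives the real
outcome value of each element of `Y`. -/
noncomputable def condE (ν : Y → ℝ) (q : W → Fin 2 → Y → ℝ) (w : W) (t : Fin 2) : ℝ :=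
  ∑ y, ν y * condY q w t y

/-- `E_q[Y | T = t] = Σ_w q(w | T=t) · E_q[Y | T=t, W=w]` -/
noncomputable def Ey (ν : Y → ℝ) (q : W → Fin 2 → Y → ℝ) (t : Fin 2) : ℝ :=
  ∑ w, condW q w t * condE ν q w t

end Marginals

/-- **Estimable form of the weighted L1 distance.** With
`P(w|T=t) = P(w) = Q(w)`, an arbitrary weighting `β`, `R(w|T=t) = β(w,t)·Q(w|T=t)`,
and the unbiased IPW weights `β*(w,t) = Q(w)/Q(w|T=t)`, for each `t`:
`WLD_{T=t}(R,P) = Σ_w Σ_y y·β(w,t)·Q(y,w|T=t) − Σ_w Σ_y y·β*(w,t)·Q(w|T=t)·Q(y|T=t,W=w)`,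
i.e. `WLD_{T=t}(R,P) = E_Q[Yβ|T=t] − E_Q[Yβ*|T=t]`. -/
theorem wld_estimable_form
    {W Y : Type*} [Fintype W] [Fintype Y] [Nonempty W] [Nonempty Y]
    (ν : Y → ℝ) (P Q : W → Fin 2 → Y → ℝ) (hP : IsDist P) (hQ : IsDist Q)
    (hPt : ∀ t, 0 < pT P t) (hQt : ∀ t, 0 < pT Q t)
    (hPwt : ∀ w t, 0 < pWT P w t) (hQwt : ∀ w t, 0 < pWT Q w t)
    (hPw : ∀ w, 0 < pW P w) (hQw : ∀ w, 0 < pW Q w)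
    (hmarg : ∀ w t, condW P w t = pW P w ∧ pW P w = pW Q w)
    (β : W → Fin 2 → ℝ)
    (RcondW : W → Fin 2 → ℝ) (hRcondW : ∀ w t, RcondW w t = β w t * condW Q w t)
    (βstar : W → Fin 2 → ℝ) (hβstar : ∀ w t, βstar w t = pW Q w / condW Q w t)
    (WLD : Fin 2 → ℝ)
    (hWLD : ∀ t, WLD t = ∑ w, (RcondW w t - condW P w t) * condE ν Q w t) :
    ∀ t : Fin 2,
      WLD t = ∑ w, ∑ y, ν y * β w t * condYW Q w t y -
        ∑ w, ∑ y, ν y * βstar w t * condW Q w t * condY Q w t y := by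
  intro t
  rw [hWLD t]
  have h1 : ∀ w, ∑ y, ν y * β w t * condYW Q w t y = β w t * condW Q w t * condE ν Q w t := by
    intro w
    rw [condE, Finset.mul_sum]
    refine Finset.sum_congr rfl fun y _ => ?_
    have hwt := (hQwt w t).ne'
    have ht := (hQt t).ne'
    rw [condYW, condY, condW]
    field_simp
  have h2 : ∀ w, ∑ y, ν y * βstar w t * condW Q w t * condY Q w t y
      = condW P w t * condE ν Q w t := by
    intro w
    have hc : condW Q w t ≠ 0 := by
      have := div_pos (hQwt w t) (hQt t)
      rw [condW]; positivity
    have hb : βstar w t * condW Q w t = condW P w t := by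
      rw [hβstar, (hmarg w t).1, (hmarg w t).2, div_mul_cancel₀ _ hc]
    rw [condE, Finset.mul_sum]
    refine Finset.sum_congr rfl fun y _ => ?_
    rw [← hb]; ring
  simp only [h1, h2, hRcondW, sub_mul, Finset.sum_sub_distrib]
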